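/- Let Γ be a countable group generated by elements (g_j)_{j∈ℕ}, and for notational convenience set g_{−j} = g_j^{−1} for j ∈ ℕ. Then Γ is sofic if and only if there exist permutation matrices (T_j^{(N)})_{j,N∈ℕ} with T_j^{(N)} ∈ M_N(ℂ), writing T_{−j}^{(N)} = (T_j^{(N)})^{−1}, such that for all m ∈ ℕ and all j(1), …, j(m) ∈ ℤ∖{0}: lim_{N→∞} tr_N(T_{j(1)}^{(N)} ⋯ T_{j(m)}^{(N)}) = δ_{g_{j(1)}⋯g_{j(m)} = e}. Furthermore, for the 'if' direction it suffices that such matrices T_j^{(N)} exist for N ranging over some subsequence N(k) → ∞ of natural numbers. -/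

import Mathlib

open Filter MeasureTheory Matrix
open scoped BigOperators Classical

namespace GraphPaper

/-! ### Directed multigraphs (test digraphs) -/

/-- A directed multigraph with vertex type `V` and edge type `E`. -/
structure Digr (V E : Type*) where
  src : E → V
  tgt : E → V

namespace Digr

variable {V E : Type*} (D : Digr V E)

/-- One-step (direction-agnostic) adjacency. -/
def Adj (v w : V) : Prop := ∃ e : E, D.src e = v ∧ D.tgt e = w

/-- The setoid of weakly connected components. -/
def compSetoid : Setoid V := Relation.EqvGen.setoid D.Adj

/-- The weakly connected components. -/
def Components : Type _ := Quotient D.compSetoid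

/-- The number of weakly connected components. -/
noncomputable def ncomp : ℕ := Nat.card D.Components

/-- Weak connectedness. -/
def IsConnected : Prop := Nonempty V ∧ ∀ v w : V, D.compSetoid v w

/-- The digraph with one edge removed. -/
def erase (e₀ : E) : Digr V {e : E // e ≠ e₀} :=
  ⟨fun e => D.src e.1, fun e => D.tgt e.1⟩

/-- `e₀` is a cut edge: removing it increases the number of weakly connected components. -/
def IsCutEdge (e₀ : E) : Prop := D.ncomp < (D.erase e₀).ncomp

/-- Two-edge-connectedness: weakly connected with no cut edge. -/
def IsTwoEdgeConnected : Prop := D.IsConnected ∧ ∀ e : E, ¬ D.IsCutEdge e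

/-- A tree (as an undirected multigraph): connected, with no cycles and no parallel
edges; equivalently, connected and every edge is a cut edge. -/
def IsTree : Prop := D.IsConnected ∧ ∀ e : E, D.IsCutEdge e

/-- Two vertices are related iff they are joined by a path containing no cut edges;
the classes are the two-edge-connected components. -/
def tecSetoid : Setoid V :=
  Relation.EqvGen.setoid (fun v w => ∃ e : E, ¬ D.IsCutEdge e ∧ D.src e = v ∧ D.tgt e = w)

/-- The degree of a two-edge-connected component in the forest `ℱ(D)`:
the number of cut edges incident to it. -/
noncomputable def tecDeg (b : Quotient D.tecSetoid) : ℕ :=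
  Nat.card {e : E // D.IsCutEdge e ∧
    (Quotient.mk D.tecSetoid (D.src e) = b ∨ Quotient.mk D.tecSetoid (D.tgt e) = b)}

/-- `𝔣(D)`: the total number of leaves of the forest `ℱ(D)` of two-edge-connected
components, an isolated vertex counting as two leaves. -/
noncomputable def leafCount : ℕ :=
  ∑ᶠ b : Quotient D.tecSetoid,
    (if D.tecDeg b = 0 then 2 else if D.tecDeg b = 1 then 1 else 0)

/-- The quotient digraph by a partition (setoid) of the vertices. -/
def quotient (s : Setoid V) : Digr (Quotient s) E :=
  ⟨fun e => Quotient.mk s (D.src e), fun e => Quotient.mk s (D.tgt e)⟩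

/-- The subgraph retaining only the edges satisfying `p` (all vertices kept). -/
def restrict (p : E → Prop) : Digr V {e : E // p e} :=
  ⟨fun e => D.src e.1, fun e => D.tgt e.1⟩

/-- The trace of a test digraph with labels `A`. -/
noncomputable def tdTrace {ι : Type*} (A : E → Matrix ι ι ℂ) : ℂ :=
  (1 / (Nat.card ι : ℂ) ^ D.ncomp) *
    ∑ᶠ i : V → ι, ∏ᶠ e : E, A e (i (D.tgt e)) (i (D.src e))

/-- The injective trace of a test digraph with labels `A`. -/
noncomputable def tdTraceInj {ι : Type*} (A : E → Matrix ι ι ℂ) : ℂ :=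
  (1 / (Nat.card ι : ℂ) ^ D.ncomp) *
    ∑ᶠ i : V → ι,
      if Function.Injective i then ∏ᶠ e : E, A e (i (D.tgt e)) (i (D.src e)) else 0

end Digr

/-! ### Colored digraphs, partitions, and the associated auxiliary graphs -/

section Colored

variable {V E S C : Type*}

/-- `ρ_s` : the partition of `V` into weakly connected components of the subgraph of `D`
retaining only edges whose color is not related to the string `s`. -/
def rhoSetoid (D : Digr V E) (χ : E → C) (rel : S → C → Prop) (s : S) : Setoid V :=
  Relation.EqvGen.setoid (fun v w => ∃ e : E, ¬ rel s (χ e) ∧ D.src e = v ∧ D.tgt e = w)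

/-- `ω_{π,c} = ⋀_{s ∈ 𝒮_c} π_s`, the common refinement. -/
def omegaSetoid (rel : S → C → Prop) (π : S → Setoid V) (c : C) : Setoid V :=
  ⨅ s : {s : S // rel s c}, π s.1

/-- `T_{π,c} = (T|_c)/ω_{π,c}`. -/
def Tpc (D : Digr V E) (χ : E → C) (rel : S → C → Prop) (π : S → Setoid V) (c : C) :
    Digr (Quotient (omegaSetoid rel π c)) {e : E // χ e = c} :=
  (D.restrict (fun e => χ e = c)).quotient (omegaSetoid rel π c)

/-- `𝒢_{π,s} = (T|_{𝒞_s})/π_s`. -/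
def Gps (D : Digr V E) (χ : E → C) (rel : S → C → Prop) (π : S → Setoid V) (s : S) :
    Digr (Quotient (π s)) {e : E // rel s (χ e)} :=
  (D.restrict (fun e => rel s (χ e))).quotient (π s)

/-- The map `h_{s,c} : V(T_{π,c}) → V(𝒢_{π,s})`, `[v]_{ω_{π,c}} ↦ [v]_{π_s}`. -/
def hmap (rel : S → C → Prop) (π : S → Setoid V) {s : S} {c : C} (h : rel s c) :
    Quotient (omegaSetoid rel π c) → Quotient (π s) :=
  fun q => Quotient.liftOn q (fun v => Quotient.mk (π s) v)
    (fun a b hab => Quot.sound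
      (Setoid.le_def.mp (iInf_le (fun s' : {s' : S // rel s' c} => π s'.1) ⟨s, h⟩) hab))

/-- The vertex set of the graph of colored components `GCC(T,π,s)`. -/
def GCCVert (D : Digr V E) (χ : E → C) (rel : S → C → Prop) (π : S → Setoid V) (s : S) :
    Type _ :=
  Quotient (π s) ⊕ (Σ c : {c : C // rel s c}, (Tpc D χ rel π c.1).Components)

/-- The edge set of `GCC(T,π,s)`. -/
def GCCEdge (rel : S → C → Prop) (π : S → Setoid V) (s : S) : Type _ :=
  Σ c : {c : C // rel s c}, Quotient (omegaSetoid rel π c.1)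

/-- The graph of colored components `GCC(T,π,s)`: the bipartite multigraph with an edge
for each `v ∈ V(T_{π,c})` (`c ∈ 𝒞_s`), joining the component of `T_{π,c}` containing `v`
to `h_{s,c}(v)`. -/
def GCC (D : Digr V E) (χ : E → C) (rel : S → C → Prop) (π : S → Setoid V) (s : S) :
    Digr (GCCVert D χ rel π s) (GCCEdge rel π s) where
  src := fun p => Sum.inr ⟨p.1, Quotient.mk (Tpc D χ rel π p.1.1).compSetoid p.2⟩
  tgt := fun p => Sum.inl (hmap rel π p.1.2 p.2)

end Colored

/-! ### The matrix model -/

section Model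

variable {S C : Type*}

/-- Index set for `⊗_{s ∈ 𝒮} M_N(ℂ)`. -/
abbrev BigIx (S : Type*) (N : ℕ) := S → Fin N

/-- Index set for `⊗_{s ∈ 𝒮_c} M_N(ℂ)`. -/
abbrev ColIx (rel : S → C → Prop) (c : C) (N : ℕ) := {s : S // rel s c} → Fin N

/-- View a matrix in `⊗_{s ∈ 𝒮_c} M_N(ℂ)` inside `⊗_{s ∈ 𝒮} M_N(ℂ)` by tensoring with
the identity on the remaining factors. -/
noncomputable def embed [Fintype S] (rel : S → C → Prop) (c : C) {N : ℕ}
    (X : Matrix (ColIx rel c N) (ColIx rel c N) ℂ) :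
    Matrix (BigIx S N) (BigIx S N) ℂ :=
  Matrix.of fun a b =>
    if (∀ s : S, ¬ rel s c → a s = b s) then X (fun s => a s.1) (fun s => b s.1) else 0

/-- The permutation matrix of a permutation. -/
def permMat {ι : Type*} [DecidableEq ι] (σ : Equiv.Perm ι) : Matrix ι ι ℂ :=
  Matrix.of fun i j => if σ j = i then 1 else 0

/-- `X̲ = Σ_c^* X Σ_c`, viewed inside `⊗_{s ∈ 𝒮} M_N(ℂ)`. -/
noncomputable def conjEmbed [Fintype S] (rel : S → C → Prop) (c : C) {N : ℕ}
    (σc : Equiv.Perm (ColIx rel c N))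
    (X : Matrix (ColIx rel c N) (ColIx rel c N) ℂ) :
    Matrix (BigIx S N) (BigIx S N) ℂ :=
  embed rel c ((permMat σc)ᴴ * X * permMat σc)

/-- `Δ`, the conditional expectation onto the diagonal. -/
def diagPart {ι : Type*} [DecidableEq ι] (M : Matrix ι ι ℂ) : Matrix ι ι ℂ :=
  Matrix.diagonal fun i => M i i

/-- The normalized `L²`-norm `‖M‖₂ = tr_n(M^*M)^{1/2}`. -/
noncomputable def l2norm {ι : Type*} [Fintype ι] (M : Matrix ι ι ℂ) : ℝ :=
  Real.sqrt ((Matrix.trace (Mᴴ * M) / (Fintype.card ι : ℂ)).re)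

/-- The operator norm of a matrix acting on Euclidean space. -/
noncomputable def opNorm {ι : Type*} [Fintype ι] [DecidableEq ι] (M : Matrix ι ι ℂ) : ℝ :=
  ‖Matrix.toEuclideanCLM (𝕜 := ℂ) M‖

/-- The ordered product `f 0 * f 1 * ⋯ * f (k-1)`. -/
def prodList {M : Type*} [Monoid M] (k : ℕ) (f : Fin k → M) : M :=
  ((List.finRange k).map f).prod

/-- `γ_N(T,π)`. -/
noncomputable def gammaN {V E : Type*} [Fintype S] (rel : S → C → Prop)
    (D : Digr V E) (χ : E → C) (N : ℕ)
    (X : (e : E) → Matrix (ColIx rel (χ e) N) (ColIx rel (χ e) N) ℂ)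
    (Λ : V → Matrix (BigIx S N) (BigIx S N) ℂ)
    (π : S → Setoid V)
    (σ : (c : C) → Equiv.Perm (ColIx rel c N)) : ℂ :=
  (1 / (N : ℂ) ^ (Nat.card S)) *
    ∑ᶠ i : V → BigIx S N,
      if (∀ s : S, Setoid.ker (fun v => i v s) = π s) then
        (∏ᶠ v : V, Λ v (i v) (i v)) *
          ∏ᶠ e : E, (conjEmbed rel (χ e) (σ (χ e)) (X e)) (i (D.tgt e)) (i (D.src e))
      else 0

/-- `λ_N(T,π)`. -/
noncomputable def lambdaN {V : Type*} [Fintype S] (N : ℕ)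
    (Λ : V → Matrix (BigIx S N) (BigIx S N) ℂ) (π : S → Setoid V) : ℂ :=
  (1 / (N : ℂ) ^ (∑ᶠ s : S, Nat.card (Quotient (π s)))) *
    ∑ᶠ i : V → BigIx S N,
      if (∀ s : S, Setoid.ker (fun v => i v s) = π s) then (∏ᶠ v : V, Λ v (i v) (i v))
      else 0

/-- `τ_{N^{#𝒮}}(T̊)`, the trace of the test digraph `T` with a `Λ_v`-labelled self-loop
added at each vertex `v`. -/
noncomputable def ringTrace {V E : Type*} [Fintype S] (rel : S → C → Prop)
    (D : Digr V E) (χ : E → C) (N : ℕ)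
    (X : (e : E) → Matrix (ColIx rel (χ e) N) (ColIx rel (χ e) N) ℂ)
    (Λ : V → Matrix (BigIx S N) (BigIx S N) ℂ)
    (σ : (c : C) → Equiv.Perm (ColIx rel c N)) : ℂ :=
  (1 / (N : ℂ) ^ (Nat.card S)) *
    ∑ᶠ i : V → BigIx S N,
      (∏ᶠ v : V, Λ v (i v) (i v)) *
        ∏ᶠ e : E, (conjEmbed rel (χ e) (σ (χ e)) (X e)) (i (D.tgt e)) (i (D.src e))

/-- Expectation with respect to independent uniformly random permutations, one for each
color: the average over all tuples of permutations. -/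
noncomputable def Eperm [Fintype S] (rel : S → C → Prop) (N : ℕ)
    (f : ((c : C) → Equiv.Perm (ColIx rel c N)) → ℂ) : ℂ :=
  (∑ᶠ σ : (c : C) → Equiv.Perm (ColIx rel c N), f σ) /
    (Nat.card ((c : C) → Equiv.Perm (ColIx rel c N)) : ℂ)

/-- Transport a matrix label along an equality of colors. -/
def castCol (rel : S → C → Prop) {N : ℕ} {c c' : C} (h : c = c')
    (X : Matrix (ColIx rel c N) (ColIx rel c N) ℂ) :
    Matrix (ColIx rel c' N) (ColIx rel c' N) ℂ := h ▸ X

/-- The uniform probability measure on the tuples of permutations (with the discrete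
`σ`-algebra). -/
noncomputable def uniformTupleMeasure [Fintype C] [Fintype S] (rel : S → C → Prop) (N : ℕ) :=
  letI : MeasurableSpace ((c : C) → Equiv.Perm (ColIx rel c N)) := ⊤
  haveI : Nonempty ((c : C) → Equiv.Perm (ColIx rel c N)) := ⟨fun _ => 1⟩
  ((PMF.uniformOfFintype ((c : C) → Equiv.Perm (ColIx rel c N))).toMeasure :
    Measure ((c : C) → Equiv.Perm (ColIx rel c N)))

/-- The tuple `(Σ_c)_{c ∈ 𝒞}` of random permutations is uniformly distributed on the
product (equivalently, the `Σ_c` are independent and each uniform). -/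
def hasUniformLaw [Fintype C] [Fintype S] (rel : S → C → Prop) {Ω : Type*}
    [MeasurableSpace Ω] (P : Measure Ω) (N : ℕ)
    (Sp : (c : C) → Ω → Equiv.Perm (ColIx rel c N)) : Prop :=
  letI : MeasurableSpace ((c : C) → Equiv.Perm (ColIx rel c N)) := ⊤
  Measure.map (fun ω c => Sp c ω) P = uniformTupleMeasure rel N

end Model

/-- A word `χ : [k] → 𝒞` is `𝒢`-reduced. -/
def GReduced {C : Type*} (Edg : C → C → Prop) {k : ℕ} (χ : Fin k → C) : Prop :=
  ∀ i j : Fin k, i < j → χ i = χ j → ∃ l : Fin k, i < l ∧ l < j ∧ ¬ Edg (χ i) (χ l)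

/-! ### Sofic groups and graph products of groups -/

/-- The normalized Hamming distance on `S_N`. -/
noncomputable def dHamm {n : ℕ} (σ τ : Equiv.Perm (Fin n)) : ℝ :=
  ((Finset.univ.filter fun j : Fin n => σ j ≠ τ j).card : ℝ) / n

/-- A group is sofic if it admits an asymptotic homomorphism into permutation groups. -/
def IsSofic (Γ : Type*) [Group Γ] : Prop :=
  ∃ (Nk : ℕ → ℕ) (σ : (k : ℕ) → Γ → Equiv.Perm (Fin (Nk k))),
    Tendsto Nk atTop atTop ∧
    (∀ g h : Γ, Tendsto (fun k => dHamm (σ k g * σ k h) (σ k (g * h))) atTop (nhds 0)) ∧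
    (∀ g : Γ, Tendsto (fun k => dHamm (σ k g) 1) atTop
      (nhds (if g = 1 then 0 else 1)))

/-- The normal subgroup of the free product generated by the commutators of elements of
vertex groups joined by an edge. -/
def graphProductKer {C : Type*} (Edg : C → C → Prop) (G : C → Type*)
    [∀ c, Group (G c)] : Subgroup (Monoid.CoprodI G) :=
  Subgroup.normalClosure
    {x | ∃ (c c' : C) (_ : Edg c c') (g : G c) (g' : G c'),
      x = Monoid.CoprodI.of g * Monoid.CoprodI.of g' *
        (Monoid.CoprodI.of g)⁻¹ * (Monoid.CoprodI.of g')⁻¹}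

/-- The graph product of the groups `(G c)_{c ∈ 𝒞}` over the graph with edge relation
`Edg`. -/
def GraphProduct {C : Type*} (Edg : C → C → Prop) (G : C → Type*) [∀ c, Group (G c)] :
    Type _ :=
  Monoid.CoprodI G ⧸ graphProductKer Edg G

instance graphProductKer_normal {C : Type*} (Edg : C → C → Prop) (G : C → Type*)
    [∀ c, Group (G c)] : (graphProductKer Edg G).Normal :=
  Subgroup.normalClosure_normal

instance {C : Type*} (Edg : C → C → Prop) (G : C → Type*) [∀ c, Group (G c)] :
    Group (GraphProduct Edg G) :=
  QuotientGroup.Quotient.group _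

/-- The group element corresponding to a word in the generators and their inverses:
the letter `(j, tt)` is `g_j`, and `(j, ff)` is `g_j⁻¹`. -/
def wordElemG {Γ : Type*} [Group Γ] (g : ℕ → Γ) {m : ℕ} (w : Fin m → ℕ × Bool) : Γ :=
  prodList m (fun i => if (w i).2 then g (w i).1 else (g (w i).1)⁻¹)

/-- The matrix product corresponding to a word in permutation matrices and their
inverses. -/
noncomputable def wordMat {N m : ℕ} (T : ℕ → Equiv.Perm (Fin N)) (w : Fin m → ℕ × Bool) :
    Matrix (Fin N) (Fin N) ℂ :=
  prodList m (fun i => if (w i).2 then permMat (T (w i).1) else (permMat (T (w i).1))⁻¹)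

section SoficProofAux


section Aux
open Finset
variable {n : ℕ}

lemma permMat_one {ι : Type*} [DecidableEq ι] : permMat (1 : Equiv.Perm ι) = 1 := by
  ext i j
  simp [permMat, Matrix.one_apply, eq_comm]

lemma permMat_mul {ι : Type*} [Fintype ι] [DecidableEq ι] (σ τ : Equiv.Perm ι) :
    permMat (σ * τ) = permMat σ * permMat τ := by
  ext i j
  simp only [permMat, Matrix.mul_apply, Matrix.of_apply, Equiv.Perm.mul_apply]
  rw [Finset.sum_eq_single (τ j)]
  · simp; congr
  · intro k _ hk
    simp [Ne.symm hk]
  · simp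

noncomputable def permMatHom (ι : Type*) [Fintype ι] [DecidableEq ι] :
    Equiv.Perm ι →* Matrix ι ι ℂ where
  toFun := permMat
  map_one' := permMat_one
  map_mul' := permMat_mul

@[simp] lemma permMatHom_apply {ι : Type*} [Fintype ι] [DecidableEq ι] (σ : Equiv.Perm ι) :
    permMatHom ι σ = permMat σ := rfl

lemma permMat_inv {ι : Type*} [Fintype ι] [DecidableEq ι] (σ : Equiv.Perm ι) :
    (permMat σ)⁻¹ = permMat σ⁻¹ :=
  Matrix.inv_eq_right_inv (by rw [← permMat_mul, mul_inv_cancel, permMat_one])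

noncomputable def fixCount {ι : Type*} [Fintype ι] [DecidableEq ι] (σ : Equiv.Perm ι) : ℕ :=
  (Finset.univ.filter fun j => σ j = j).card

lemma trace_permMat (σ : Equiv.Perm (Fin n)) :
    Matrix.trace (permMat σ) = (fixCount σ : ℂ) := by
  rw [fixCount, Finset.card_filter]
  push_cast
  simp [Matrix.trace, Matrix.diag, permMat]

lemma fixCount_le (σ : Equiv.Perm (Fin n)) : fixCount σ ≤ n := by
  unfold fixCount
  simpa using Finset.card_filter_le Finset.univ fun j => σ j = j

lemma dHamm_nonneg (σ τ : Equiv.Perm (Fin n)) : 0 ≤ dHamm σ τ := by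
  unfold dHamm; positivity

lemma dHamm_self {n : ℕ} (σ : Equiv.Perm (Fin n)) : dHamm σ σ = 0 := by
  simp [dHamm]

lemma dHamm_comm (σ τ : Equiv.Perm (Fin n)) : dHamm σ τ = dHamm τ σ := by
  unfold dHamm
  have : (univ.filter fun j => σ j ≠ τ j) = univ.filter fun j => τ j ≠ σ j := by
    ext j; simp [ne_comm]
  rw [this]

lemma dHamm_mul_left (ρ σ τ : Equiv.Perm (Fin n)) : dHamm (ρ * σ) (ρ * τ) = dHamm σ τ := by
  unfold dHamm
  have : (univ.filter fun j => (ρ * σ) j ≠ (ρ * τ) j) = univ.filter fun j => σ j ≠ τ j := by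
    ext j; simp [Equiv.Perm.mul_apply]
  rw [this]

lemma dHamm_mul_right (σ τ ρ : Equiv.Perm (Fin n)) : dHamm (σ * ρ) (τ * ρ) = dHamm σ τ := by
  unfold dHamm
  have : (univ.filter fun j => (σ * ρ) j ≠ (τ * ρ) j)
      = (univ.filter fun j => σ j ≠ τ j).map ρ.symm.toEmbedding := by
    ext j
    simp only [mem_filter, Finset.mem_map, mem_univ, true_and]
    simp only [Equiv.coe_toEmbedding, Equiv.Perm.mul_apply]
    constructor
    · intro h
      exact ⟨ρ j, h, Equiv.symm_apply_apply _ _⟩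
    · rintro ⟨a, ha, rfl⟩
      simpa using ha
  rw [this, Finset.card_map]

lemma dHamm_triangle (σ ρ τ : Equiv.Perm (Fin n)) : dHamm σ τ ≤ dHamm σ ρ + dHamm ρ τ := by
  unfold dHamm
  rw [← add_div]
  rcases Nat.eq_zero_or_pos n with h | h
  · subst h; simp
  rw [div_le_div_iff_of_pos_right (by positivity)]
  have hsub : (univ.filter fun j => σ j ≠ τ j)
      ⊆ (univ.filter fun j => σ j ≠ ρ j) ∪ (univ.filter fun j => ρ j ≠ τ j) := by
    intro j hj
    simp only [mem_filter, mem_union, mem_univ, true_and] at *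
    by_contra hc
    push_neg at hc
    exact hj (hc.1.trans hc.2)
  calc ((univ.filter fun j => σ j ≠ τ j).card : ℝ)
      ≤ (((univ.filter fun j => σ j ≠ ρ j) ∪ (univ.filter fun j => ρ j ≠ τ j)).card : ℝ) := by
        exact_mod_cast Finset.card_le_card hsub
    _ ≤ _ := by exact_mod_cast Finset.card_union_le _ _

lemma dHamm_one_eq (hn : 0 < n) (σ : Equiv.Perm (Fin n)) :
    dHamm σ 1 = 1 - (fixCount σ : ℝ) / n := by
  have h := Finset.card_filter_add_card_filter_not
      (s := (univ : Finset (Fin n))) (p := fun j => σ j = j)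
  have hfilter : (univ.filter fun j => σ j ≠ (1 : Equiv.Perm (Fin n)) j)
      = univ.filter fun j => ¬ σ j = j := by
    ext j; rw [mem_filter, mem_filter]; simp
  unfold dHamm fixCount
  rw [hfilter, eq_sub_iff_add_eq, ← add_div, div_eq_one_iff_eq (by positivity)]
  have h2 : (univ.filter fun j => ¬ σ j = j).card + (univ.filter fun j => σ j = j).card = n := by
    simpa [add_comm] using h
  exact_mod_cast h2

end Aux

section EvalL
variable {G H : Type*} [Group G] [Group H]

def evalL (u : ℕ → G) (l : List (ℕ × Bool)) : G :=
  (l.map fun p => if p.2 then u p.1 else (u p.1)⁻¹).prod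

@[simp] lemma evalL_nil (u : ℕ → G) : evalL u [] = 1 := rfl

lemma evalL_cons (u : ℕ → G) (p : ℕ × Bool) (l : List (ℕ × Bool)) :
    evalL u (p :: l) = (if p.2 then u p.1 else (u p.1)⁻¹) * evalL u l := by
  simp [evalL]

lemma evalL_append (u : ℕ → G) (l₁ l₂ : List (ℕ × Bool)) :
    evalL u (l₁ ++ l₂) = evalL u l₁ * evalL u l₂ := by
  simp [evalL]

def invL (l : List (ℕ × Bool)) : List (ℕ × Bool) := (l.map fun p => (p.1, !p.2)).reverse

lemma evalL_invL (u : ℕ → G) (l : List (ℕ × Bool)) : evalL u (invL l) = (evalL u l)⁻¹ := by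
  induction l with
  | nil => simp [invL]
  | cons p l ih =>
    have h1 : invL (p :: l) = invL l ++ [(p.1, !p.2)] := by simp [invL]
    rw [h1, evalL_append, ih, evalL_cons, evalL_cons, evalL_nil, _root_.mul_inv_rev]
    cases hb : p.2 <;> simp

lemma evalL_hom (φ : G →* H) (u : ℕ → G) (l : List (ℕ × Bool)) :
    evalL (fun j => φ (u j)) l = φ (evalL u l) := by
  induction l with
  | nil => simp
  | cons p l ih =>
    rw [evalL_cons, evalL_cons, ih, _root_.map_mul]
    cases hb : p.2 <;> simp

lemma prodList_eq_ofFn {M : Type*} [Monoid M] (k : ℕ) (f : Fin k → M) :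
    prodList k f = (List.ofFn f).prod := by
  rw [prodList, List.ofFn_eq_map]

lemma wordElemG_eq {Γ : Type*} [Group Γ] (g : ℕ → Γ) {m : ℕ} (w : Fin m → ℕ × Bool) :
    wordElemG g w = evalL g (List.ofFn w) := by
  rw [wordElemG, prodList, evalL, List.ofFn_eq_map, List.map_map]
  rfl

lemma wordMat_eq {N m : ℕ} (T : ℕ → Equiv.Perm (Fin N)) (w : Fin m → ℕ × Bool) :
    wordMat T w = permMat (evalL T (List.ofFn w)) := by
  rw [wordMat, prodList, evalL, List.ofFn_eq_map, List.map_map, ← permMatHom_apply,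
    map_list_prod, List.map_map]
  congr 1
  apply List.map_congr_left
  intro i _
  show _ = permMatHom (Fin N) (if (w i).2 then T (w i).1 else (T (w i).1)⁻¹)
  cases hb : (w i).2 <;> simp [permMat_inv]

end EvalL

section Block
variable (M N : ℕ)

def blockEquiv : (Fin (N / M) × Fin M) ⊕ Fin (N % M) ≃ Fin N :=
  ((Equiv.sumCongr finProdFinEquiv (Equiv.refl _)).trans finSumFinEquiv).trans
    (finCongr (by rw [mul_comm]; exact Nat.div_add_mod N M))

def blockAux (σ : Equiv.Perm (Fin M)) :
    Equiv.Perm ((Fin (N / M) × Fin M) ⊕ Fin (N % M)) :=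
  Equiv.sumCongr (Equiv.prodCongr (Equiv.refl _) σ) (Equiv.refl _)

lemma blockAux_mul (σ τ : Equiv.Perm (Fin M)) (y) :
    blockAux M N (σ * τ) y = blockAux M N σ (blockAux M N τ y) := by
  rcases y with ⟨a, b⟩ | c <;> simp [blockAux, Equiv.Perm.mul_apply]

def blockHom : Equiv.Perm (Fin M) →* Equiv.Perm (Fin N) where
  toFun σ := (blockEquiv M N).permCongr (blockAux M N σ)
  map_one' := by
    ext x
    simp only [Equiv.permCongr_apply]
    have h : ∀ y, blockAux M N 1 y = y := by
      rintro (⟨a, b⟩ | c) <;> rfl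
    rw [h, Equiv.apply_symm_apply]
    rfl
  map_mul' σ τ := by
    ext x
    simp only [Equiv.permCongr_apply, Equiv.Perm.mul_apply, Equiv.symm_apply_apply]
    rw [blockAux_mul]

lemma fixCount_blockHom (σ : Equiv.Perm (Fin M)) :
    fixCount (blockHom M N σ) = (N / M) * fixCount σ + N % M := by
  classical
  have happ : ∀ x : Fin N, blockHom M N σ x
      = blockEquiv M N (blockAux M N σ ((blockEquiv M N).symm x)) := fun _ => rfl
  rw [fixCount, Finset.card_filter,
    ← Equiv.sum_comp (blockEquiv M N) (fun x => if blockHom M N σ x = x then 1 else 0)]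
  have hcond : ∀ y, (blockHom M N σ (blockEquiv M N y) = blockEquiv M N y)
      ↔ blockAux M N σ y = y := by
    intro y
    rw [happ, Equiv.symm_apply_apply, Equiv.apply_eq_iff_eq]
  have : ∀ y, (if blockHom M N σ (blockEquiv M N y) = blockEquiv M N y then (1:ℕ) else 0)
      = (if blockAux M N σ y = y then 1 else 0) := by
    intro y; simp only [hcond]
  rw [Finset.sum_congr rfl fun y _ => this y, Fintype.sum_sum_type]
  have hinr : ∀ c : Fin (N % M), blockAux M N σ (Sum.inr c) = Sum.inr c := fun _ => rfl
  have hinl : ∀ p : Fin (N / M) × Fin M,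
      (blockAux M N σ (Sum.inl p) = Sum.inl p) ↔ σ p.2 = p.2 := by
    rintro ⟨a, b⟩
    simp [blockAux, Prod.ext_iff]
  congr 1
  · rw [Fintype.sum_prod_type]
    have : ∀ a : Fin (N / M), (∑ b : Fin M,
        if blockAux M N σ (Sum.inl (a, b)) = Sum.inl (a, b) then (1:ℕ) else 0)
        = fixCount σ := by
      intro a
      rw [fixCount, Finset.card_filter]
      apply Finset.sum_congr rfl
      intro b _
      simp only [hinl]
    rw [Finset.sum_congr rfl fun a _ => this a, Finset.sum_const, Finset.card_univ,
      Fintype.card_fin, smul_eq_mul]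
  · simp [hinr]

end Block

lemma evalL_single {G : Type*} [Group G] (u : ℕ → G) (j : ℕ) :
    evalL u [(j, true)] = u j := by simp [evalL]

lemma matrix_to_sofic {Γ : Type} [Group Γ] (g : ℕ → Γ)
    (hgen : Subgroup.closure (Set.range g) = ⊤)
    (h : ∃ Nk : ℕ → ℕ, Tendsto Nk atTop atTop ∧
        ∃ T : ℕ → (p : ℕ) → Equiv.Perm (Fin (Nk p)),
          ∀ (m : ℕ) (w : Fin m → ℕ × Bool),
            Tendsto (fun p : ℕ => Matrix.trace (wordMat (fun j => T j p) w) / (Nk p : ℂ))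
              atTop (nhds (if wordElemG g w = 1 then 1 else 0))) : IsSofic Γ := by
  obtain ⟨Nk, hNk, T, hT⟩ := h
  have hfix : ∀ l : List (ℕ × Bool),
      Tendsto (fun p => (fixCount (evalL (fun j => T j p) l) : ℝ) / (Nk p : ℝ)) atTop
        (nhds (if evalL g l = 1 then 1 else 0)) := by
    intro l
    have h1 := hT l.length l.get
    have h3 : wordElemG g l.get = evalL g l := by rw [wordElemG_eq, List.ofFn_get]
    rw [h3] at h1
    have h5 : (fun p => Matrix.trace (wordMat (fun j => T j p) l.get) / (Nk p : ℂ))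
        = fun p => (((fixCount (evalL (fun j => T j p) l) : ℝ) / (Nk p : ℝ) : ℝ) : ℂ) := by
      funext p
      rw [wordMat_eq, List.ofFn_get, trace_permMat]
      push_cast
      ring
    rw [h5] at h1
    have h6 := (Complex.continuous_re.tendsto _).comp h1
    simpa [Function.comp_def, apply_ite Complex.re] using h6
  have dH0 : ∀ l : List (ℕ × Bool), evalL g l = 1 →
      Tendsto (fun p => dHamm (evalL (fun j => T j p) l) 1) atTop (nhds 0) := by
    intro l hl
    have hev : (fun p => 1 - (fixCount (evalL (fun j => T j p) l) : ℝ) / (Nk p : ℝ))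
        =ᶠ[atTop] fun p => dHamm (evalL (fun j => T j p) l) 1 :=
      (hNk.eventually_ge_atTop 1).mono fun p hp => (dHamm_one_eq hp _).symm
    have h7 : Tendsto (fun p => 1 - (fixCount (evalL (fun j => T j p) l) : ℝ) / (Nk p : ℝ))
        atTop (nhds 0) := by
      have := tendsto_const_nhds (x := (1:ℝ)) (f := atTop (α := ℕ)) |>.sub (hfix l)
      rw [hl] at this
      simpa using this
    exact h7.congr' hev
  have hex : ∀ γ : Γ, ∃ l : List (ℕ × Bool), evalL g l = γ := by
    intro γ
    have hγ : γ ∈ Subgroup.closure (Set.range g) := by rw [hgen]; trivial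
    induction hγ using Subgroup.closure_induction with
    | mem x hx =>
      obtain ⟨j, rfl⟩ := hx
      exact ⟨[(j, true)], evalL_single g j⟩
    | one => exact ⟨[], rfl⟩
    | mul x y hx hy ihx ihy =>
      obtain ⟨l₁, hl₁⟩ := ihx
      obtain ⟨l₂, hl₂⟩ := ihy
      exact ⟨l₁ ++ l₂, by rw [evalL_append, hl₁, hl₂]⟩
    | inv x hx ihx =>
      obtain ⟨l₁, hl₁⟩ := ihx
      exact ⟨invL l₁, by rw [evalL_invL, hl₁]⟩
  choose word hword using hex
  refine ⟨Nk, fun p γ => evalL (fun j => T j p) (word γ), hNk, ?_, ?_⟩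
  · intro γ γ'
    have hkey : ∀ p, dHamm
        (evalL (fun j => T j p) (invL (word (γ * γ')) ++ (word γ ++ word γ'))) 1
        = dHamm (evalL (fun j => T j p) (word γ) * evalL (fun j => T j p) (word γ'))
          (evalL (fun j => T j p) (word (γ * γ'))) := by
      intro p
      set u := fun j => T j p with hu
      have e1 : evalL u (invL (word (γ * γ')) ++ (word γ ++ word γ'))
          = (evalL u (word (γ * γ')))⁻¹ * (evalL u (word γ) * evalL u (word γ')) := by
        rw [evalL_append, evalL_invL, evalL_append]
      rw [e1]
      have e2 := dHamm_mul_left ((evalL u (word (γ * γ')))⁻¹)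
        (evalL u (word γ) * evalL u (word γ')) (evalL u (word (γ * γ')))
      rw [inv_mul_cancel] at e2
      exact e2
    have hl : evalL g (invL (word (γ * γ')) ++ (word γ ++ word γ')) = 1 := by
      rw [evalL_append, evalL_invL, evalL_append, hword, hword, hword, inv_mul_cancel]
    exact (dH0 _ hl).congr hkey
  · intro γ
    have hev : (fun p => 1 - (fixCount (evalL (fun j => T j p) (word γ)) : ℝ) / (Nk p : ℝ))
        =ᶠ[atTop] fun p => dHamm (evalL (fun j => T j p) (word γ)) 1 :=
      (hNk.eventually_ge_atTop 1).mono fun p hp => (dHamm_one_eq hp _).symm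
    have h8 : Tendsto
        (fun p => 1 - (fixCount (evalL (fun j => T j p) (word γ)) : ℝ) / (Nk p : ℝ))
        atTop (nhds (if γ = 1 then 0 else 1)) := by
      have h9 := tendsto_const_nhds (x := (1:ℝ)) (f := atTop (α := ℕ)) |>.sub (hfix (word γ))
      rw [hword γ] at h9
      convert h9 using 2
      split_ifs <;> norm_num
    exact h8.congr' hev


lemma sofic_to_matrix {Γ : Type} [Group Γ] (g : ℕ → Γ) (hs : IsSofic Γ) :
    ∃ T : ℕ → (N : ℕ) → Equiv.Perm (Fin N),
      ∀ (m : ℕ) (w : Fin m → ℕ × Bool),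
        Tendsto (fun N : ℕ => Matrix.trace (wordMat (fun j => T j N) w) / (N : ℂ))
          atTop (nhds (if wordElemG g w = 1 then 1 else 0)) := by
  obtain ⟨Nk, σ, hNk, hmul, hdist⟩ := hs
  have hone : Tendsto (fun k => dHamm (σ k 1) 1) atTop (nhds 0) := by
    simpa using hdist 1
  -- Step A: words approximate word elements
  have hd : ∀ l : List (ℕ × Bool),
      Tendsto (fun k => dHamm (evalL (fun j => σ k (g j)) l) (σ k (evalL g l)))
        atTop (nhds 0) := by
    intro l
    induction l with
    | nil =>
      have he : (fun k => dHamm (σ k 1) 1) = fun k =>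
          dHamm (evalL (fun j => σ k (g j)) []) (σ k (evalL g [])) := by
        funext k
        show dHamm (σ k 1) 1 = dHamm 1 (σ k (1 : Γ))
        rw [dHamm_comm]
      exact he ▸ hone
    | cons p l ih =>
      have herr2 : Tendsto (fun k => dHamm
          (if p.2 then σ k (g p.1) else (σ k (g p.1))⁻¹)
          (σ k (if p.2 then g p.1 else (g p.1)⁻¹))) atTop (nhds 0) := by
        cases hb : p.2
        · simp only [hb, Bool.false_eq_true, if_false]
          have hmul' : Tendsto (fun k => dHamm (σ k (g p.1) * σ k ((g p.1)⁻¹)) (σ k 1))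
              atTop (nhds 0) := by
            have := hmul (g p.1) (g p.1)⁻¹
            simpa [mul_inv_cancel] using this
          apply squeeze_zero (g := fun k => dHamm (σ k 1) 1
            + dHamm (σ k (g p.1) * σ k ((g p.1)⁻¹)) (σ k 1))
            (fun k => dHamm_nonneg _ _) ?_ ?_
          · intro k
            have e2 := dHamm_mul_left (σ k (g p.1)) ((σ k (g p.1))⁻¹) (σ k ((g p.1)⁻¹))
            rw [mul_inv_cancel] at e2
            rw [← e2]
            calc dHamm 1 (σ k (g p.1) * σ k ((g p.1)⁻¹))
                ≤ dHamm 1 (σ k 1) + dHamm (σ k 1) (σ k (g p.1) * σ k ((g p.1)⁻¹)) :=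
                  dHamm_triangle _ _ _
              _ = _ := by
                  rw [dHamm_comm (σ k 1) (σ k (g p.1) * σ k ((g p.1)⁻¹)),
                    dHamm_comm 1 (σ k 1)]
          · simpa using hone.add hmul'
        · simp only [hb, if_true]
          simp only [dHamm_self]
          exact tendsto_const_nhds
      have hbound : ∀ k, dHamm (evalL (fun j => σ k (g j)) (p :: l)) (σ k (evalL g (p :: l)))
          ≤ dHamm (evalL (fun j => σ k (g j)) l) (σ k (evalL g l))
            + dHamm (if p.2 then σ k (g p.1) else (σ k (g p.1))⁻¹)
                (σ k (if p.2 then g p.1 else (g p.1)⁻¹))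
            + dHamm ((σ k (if p.2 then g p.1 else (g p.1)⁻¹)) * σ k (evalL g l))
                (σ k ((if p.2 then g p.1 else (g p.1)⁻¹) * evalL g l)) := by
        intro k
        rw [evalL_cons, evalL_cons]
        set a := if p.2 then σ k (g p.1) else (σ k (g p.1))⁻¹ with ha
        set h0 : Γ := if p.2 then g p.1 else (g p.1)⁻¹ with hh0
        set πl := evalL (fun j => σ k (g j)) l with hπl
        set sl := σ k (evalL g l) with hsl
        calc dHamm (a * πl) (σ k (h0 * evalL g l))
            ≤ dHamm (a * πl) (a * sl) + dHamm (a * sl) (σ k (h0 * evalL g l)) :=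
              dHamm_triangle _ _ _
          _ ≤ dHamm (a * πl) (a * sl) + (dHamm (a * sl) (σ k h0 * sl)
                + dHamm (σ k h0 * sl) (σ k (h0 * evalL g l))) := by
              have := dHamm_triangle (a * sl) (σ k h0 * sl) (σ k (h0 * evalL g l))
              linarith
          _ = _ := by rw [dHamm_mul_left, dHamm_mul_right]; ring
      refine squeeze_zero (fun k => dHamm_nonneg _ _) hbound ?_
      have := (ih.add herr2).add
        (hmul (if p.2 then g p.1 else (g p.1)⁻¹) (evalL g l))
      simpa using this
  -- Step B: fixed-point fractions converge
  have hF : ∀ l : List (ℕ × Bool),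
      Tendsto (fun k => (fixCount (evalL (fun j => σ k (g j)) l) : ℝ) / (Nk k : ℝ)) atTop
        (nhds (if evalL g l = 1 then 1 else 0)) := by
    intro l
    have hdist' : Tendsto (fun k => dHamm (evalL (fun j => σ k (g j)) l) 1) atTop
        (nhds (if evalL g l = 1 then 0 else 1)) := by
      have hdiff : Tendsto (fun k => dHamm (evalL (fun j => σ k (g j)) l) 1
          - dHamm (σ k (evalL g l)) 1) atTop (nhds 0) := by
        apply squeeze_zero_norm' ?_ (hd l)
        filter_upwards with k
        rw [Real.norm_eq_abs, abs_sub_le_iff]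
        constructor
        · have := dHamm_triangle (evalL (fun j => σ k (g j)) l) (σ k (evalL g l)) 1
          linarith
        · have h1 := dHamm_triangle (σ k (evalL g l)) (evalL (fun j => σ k (g j)) l) 1
          have h2 := dHamm_comm (σ k (evalL g l)) (evalL (fun j => σ k (g j)) l)
          linarith
      have := hdiff.add (hdist (evalL g l))
      simpa using this
    have hev : (fun k => 1 - dHamm (evalL (fun j => σ k (g j)) l) 1) =ᶠ[atTop]
        (fun k => (fixCount (evalL (fun j => σ k (g j)) l) : ℝ) / (Nk k : ℝ)) :=
      (hNk.eventually_ge_atTop 1).mono fun k hk => by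
        dsimp only
        rw [dHamm_one_eq hk]; ring
    have h10 : Tendsto (fun k => 1 - dHamm (evalL (fun j => σ k (g j)) l) 1) atTop
        (nhds (if evalL g l = 1 then 1 else 0)) := by
      have h11 := tendsto_const_nhds (x := (1:ℝ)) (f := atTop (α := ℕ)) |>.sub hdist'
      convert h11 using 2
      split_ifs <;> norm_num
    exact h10.congr' hev
  -- Step C: the diagonal sequence
  obtain ⟨k₀, hk₀⟩ := eventually_atTop.mp (hNk.eventually_ge_atTop 1)
  set SS : ℕ → Finset ℕ := fun N =>
    (Finset.range (N + 1)).filter fun k => k₀ ≤ k ∧ (k + 1) * Nk k ≤ N with hSS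
  set kN : ℕ → ℕ := fun N => if h : (SS N).Nonempty then (SS N).max' h else k₀ with hkNdef
  have hmem : ∀ {N k : ℕ}, k ≤ N → k₀ ≤ k → (k + 1) * Nk k ≤ N → k ∈ SS N := by
    intro N k h1 h2 h3
    simp only [hSS, Finset.mem_filter, Finset.mem_range, Nat.lt_succ_iff]
    exact ⟨h1, h2, h3⟩
  have hkN_ge : ∀ K : ℕ, ∀ᶠ N in atTop, K ≤ kN N := by
    intro K
    filter_upwards [eventually_ge_atTop (max K k₀),
      eventually_ge_atTop ((max K k₀ + 1) * Nk (max K k₀))] with N h1 h2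
    have hk1 : max K k₀ ∈ SS N := hmem h1 (le_max_right _ _) h2
    have hne : (SS N).Nonempty := ⟨_, hk1⟩
    calc K ≤ max K k₀ := le_max_left _ _
      _ ≤ (SS N).max' hne := Finset.le_max' _ _ hk1
      _ = kN N := by rw [hkNdef]; simp [hne]
  have hkN : Tendsto kN atTop atTop := tendsto_atTop.mpr hkN_ge
  have hgood' : ∀ᶠ N in atTop, 1 ≤ Nk (kN N) ∧ (kN N + 1) * Nk (kN N) ≤ N ∧ 1 ≤ N := by
    filter_upwards [eventually_ge_atTop k₀, eventually_ge_atTop ((k₀ + 1) * Nk k₀),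
      eventually_ge_atTop 1] with N h1 h2 h3
    have hk : k₀ ∈ SS N := hmem h1 le_rfl h2
    have hne : (SS N).Nonempty := ⟨_, hk⟩
    have hmax : kN N ∈ SS N := by
      rw [hkNdef]; simp only [dif_pos hne]; exact (SS N).max'_mem hne
    simp only [hSS, Finset.mem_filter, Finset.mem_range, Nat.lt_succ_iff] at hmax
    exact ⟨hk₀ _ hmax.2.1, hmax.2.2, h3⟩
  have hM0 : Tendsto (fun N => (Nk (kN N) : ℝ) / (N : ℝ)) atTop (nhds 0) := by
    apply squeeze_zero_norm' (a := fun N => 1 / ((kN N : ℝ) + 1)) ?_ ?_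
    · filter_upwards [hgood'] with N hN
      obtain ⟨hM1, hMN, hN1⟩ := hN
      have hc : ((kN N + 1) * Nk (kN N) : ℝ) ≤ N := by exact_mod_cast hMN
      rw [Real.norm_eq_abs, abs_of_nonneg (by positivity),
        div_le_div_iff₀ (by exact_mod_cast hN1) (by positivity)]
      push_cast at hc ⊢
      nlinarith
    · have h11 : Tendsto (fun N => ((kN N : ℝ) + 1)) atTop atTop :=
        tendsto_atTop_add_const_right _ 1 (tendsto_natCast_atTop_atTop.comp hkN)
      simpa [one_div, Pi.inv_def] using h11.inv_tendsto_atTop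
  -- Step D: assembly
  refine ⟨fun j N => blockHom (Nk (kN N)) N (σ (kN N) (g j)), ?_⟩
  intro m w
  have hwe : wordElemG g w = evalL g (List.ofFn w) := wordElemG_eq g w
  have htr : ∀ N : ℕ,
      Matrix.trace (wordMat (fun j => blockHom (Nk (kN N)) N (σ (kN N) (g j))) w)
      = (((N / Nk (kN N)) * fixCount (evalL (fun j => σ (kN N) (g j)) (List.ofFn w))
          + N % Nk (kN N) : ℕ) : ℂ) := by
    intro N
    rw [wordMat_eq, evalL_hom (blockHom (Nk (kN N)) N) (fun j => σ (kN N) (g j)),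
      trace_permMat, fixCount_blockHom]
  have hcNr : Tendsto (fun N : ℕ =>
      (((N / Nk (kN N)) * fixCount (evalL (fun j => σ (kN N) (g j)) (List.ofFn w))
        + N % Nk (kN N) : ℕ) : ℝ) / (N : ℝ)) atTop
      (nhds (if wordElemG g w = 1 then 1 else 0)) := by
    have hFk : Tendsto (fun N =>
        (fixCount (evalL (fun j => σ (kN N) (g j)) (List.ofFn w)) : ℝ) / (Nk (kN N) : ℝ))
        atTop (nhds (if wordElemG g w = 1 then 1 else 0)) := by
      rw [hwe]
      exact (hF (List.ofFn w)).comp hkN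
    have hGF : Tendsto (fun N : ℕ =>
        (((N / Nk (kN N)) * fixCount (evalL (fun j => σ (kN N) (g j)) (List.ofFn w))
          + N % Nk (kN N) : ℕ) : ℝ) / (N : ℝ)
        - (fixCount (evalL (fun j => σ (kN N) (g j)) (List.ofFn w)) : ℝ) / (Nk (kN N) : ℝ))
        atTop (nhds 0) := by
      apply squeeze_zero_norm' ?_ hM0
      filter_upwards [hgood'] with N hN
      obtain ⟨hM1, hMN, hN1⟩ := hN
      have hMpos : (0:ℝ) < (Nk (kN N) : ℝ) := by exact_mod_cast hM1
      have hNpos : (0:ℝ) < (N : ℝ) := by exact_mod_cast hN1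
      have hfM : fixCount (evalL (fun j => σ (kN N) (g j)) (List.ofFn w)) ≤ Nk (kN N) :=
        fixCount_le _
      have hrM : N % Nk (kN N) < Nk (kN N) := Nat.mod_lt _ (by omega)
      have hNqr : (N : ℝ) = ((N / Nk (kN N) : ℕ) : ℝ) * ((Nk (kN N) : ℕ) : ℝ)
          + ((N % Nk (kN N) : ℕ) : ℝ) := by
        have h0 : N = N / Nk (kN N) * Nk (kN N) + N % Nk (kN N) := (Nat.div_add_mod' N _).symm
        exact_mod_cast congrArg (Nat.cast : ℕ → ℝ) h0
      have hfM' : ((fixCount (evalL (fun j => σ (kN N) (g j)) (List.ofFn w)) : ℕ) : ℝ)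
          ≤ ((Nk (kN N) : ℕ) : ℝ) := by exact_mod_cast hfM
      have hrM' : ((N % Nk (kN N) : ℕ) : ℝ) ≤ ((Nk (kN N) : ℕ) : ℝ) := by
        exact_mod_cast hrM.le
      set M : ℝ := ((Nk (kN N) : ℕ) : ℝ) with hMdef
      set f : ℝ := ((fixCount (evalL (fun j => σ (kN N) (g j)) (List.ofFn w)) : ℕ) : ℝ)
        with hfdef
      set q : ℝ := ((N / Nk (kN N) : ℕ) : ℝ) with hqdef
      set r : ℝ := ((N % Nk (kN N) : ℕ) : ℝ) with hrdef
      have hf0 : (0:ℝ) ≤ f := by rw [hfdef]; positivity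
      have hr0 : (0:ℝ) ≤ r := by rw [hrdef]; positivity
      have heq : ((((N / Nk (kN N)) * fixCount (evalL (fun j => σ (kN N) (g j)) (List.ofFn w))
          + N % Nk (kN N) : ℕ) : ℝ)) / (N : ℝ)
          - f / M = r * (M - f) / ((N : ℝ) * M) := by
        have h1 : ((((N / Nk (kN N)) * fixCount (evalL (fun j => σ (kN N) (g j)) (List.ofFn w))
            + N % Nk (kN N) : ℕ) : ℝ)) = q * f + r := by push_cast; ring
        rw [h1, div_sub_div _ _ hNpos.ne' hMpos.ne']
        congr 1
        linear_combination (-(f : ℝ)) * hNqr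
      have hnum : (0:ℝ) ≤ r * (M - f) := mul_nonneg hr0 (by linarith)
      rw [Real.norm_eq_abs, heq,
        abs_of_nonneg (div_nonneg hnum (by positivity))]
      rw [div_le_div_iff₀ (by positivity) hNpos]
      have key : r * (M - f) ≤ M * M := mul_le_mul hrM' (by linarith) (by linarith)
        (by linarith [hMpos.le])
      calc r * (M - f) * (N:ℝ) ≤ M * M * (N:ℝ) :=
            mul_le_mul_of_nonneg_right key hNpos.le
        _ = M * ((N:ℝ) * M) := by ring
    have hsum := hGF.add hFk
    rw [zero_add] at hsum
    convert hsum using 2 with N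
    ring
  have hfun : (fun N : ℕ =>
      Matrix.trace (wordMat (fun j => blockHom (Nk (kN N)) N (σ (kN N) (g j))) w) / (N : ℂ))
      = fun N : ℕ => (((((N / Nk (kN N)) * fixCount
          (evalL (fun j => σ (kN N) (g j)) (List.ofFn w))
          + N % Nk (kN N) : ℕ) : ℝ) / (N : ℝ) : ℝ) : ℂ) := by
    funext N
    rw [htr N]
    push_cast
    ring
  rw [hfun]
  have := (Complex.continuous_ofReal.tendsto _).comp hcNr
  simpa [Function.comp_def, apply_ite Complex.ofReal] using this


end SoficProofAux

/-- **Proposition (matrix characterization of soficity).** A word in the generators is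
encoded as `w : Fin m → ℕ × Bool`, the letter `(j, true)` standing for `g_j` and
`(j, false)` for `g_j⁻¹ = g_{-j}`. -/
theorem statement3 {Γ : Type} [Group Γ] [Countable Γ]
    (g : ℕ → Γ) (hgen : Subgroup.closure (Set.range g) = ⊤) :
    (IsSofic Γ ↔
      ∃ T : ℕ → (N : ℕ) → Equiv.Perm (Fin N),
        ∀ (m : ℕ) (w : Fin m → ℕ × Bool),
          Tendsto (fun N : ℕ => Matrix.trace (wordMat (fun j => T j N) w) / (N : ℂ))
            atTop (nhds (if wordElemG g w = 1 then 1 else 0)))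
    ∧ ((∃ Nk : ℕ → ℕ, Tendsto Nk atTop atTop ∧
        ∃ T : ℕ → (p : ℕ) → Equiv.Perm (Fin (Nk p)),
          ∀ (m : ℕ) (w : Fin m → ℕ × Bool),
            Tendsto (fun p : ℕ => Matrix.trace (wordMat (fun j => T j p) w) / (Nk p : ℂ))
              atTop (nhds (if wordElemG g w = 1 then 1 else 0))) → IsSofic Γ) := by
  have main := matrix_to_sofic g hgen
  refine ⟨⟨fun hs => sofic_to_matrix g hs, fun h => ?_⟩, main⟩
  obtain ⟨T, hT⟩ := h
  exact main ⟨fun N => N, tendsto_id, T, hT⟩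

end GraphPaper
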